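/- Let F be a finite field of odd characteristic and V a finite-dimensional F-vector space with a nondegenerate symplectic form, decomposed as an orthogonal direct sum V = V₁ ⊕ V₂ ⊕ V₃ with each Vᵢ a nonzero nondegenerate subspace. If H ⊆ Sp(V) contains Sp(V₁ ⊕ V₂) and Sp(V₂ ⊕ V₃), then H = Sp(V). -/

import Mathlib

open LinearMap (BilinForm)

section Transvection
variable {F V : Type*} [Field F] [AddCommGroup V] [Module F V]
  (B : LinearMap.BilinForm F V)

/-- The linear map underlying a symplectic transvection. -/
noncomputable def tvmap (v : V) (c : F) : V →ₗ[F] V :=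
  LinearMap.id + (LinearMap.toSpanSingleton F V v).comp (c • B.flip v)

lemma tvmap_apply (v : V) (c : F) (x : V) :
    tvmap B v c x = x + (c * B x v) • v := by
  simp [tvmap, LinearMap.toSpanSingleton_apply, smul_smul]

lemma tvmap_comp (halt : B.IsAlt) (v : V) (c : F) :
    (tvmap B v (-c)).comp (tvmap B v c) = LinearMap.id := by
  ext x
  simp only [LinearMap.comp_apply, tvmap_apply, LinearMap.id_apply, map_add, map_smul,
    LinearMap.add_apply, halt.self_eq_zero, smul_eq_mul, mul_zero, add_zero]
  module

/-- A symplectic transvection as a linear equivalence. -/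
noncomputable def tv (halt : B.IsAlt) (v : V) (c : F) : V ≃ₗ[F] V :=
  LinearEquiv.ofLinear (tvmap B v c) (tvmap B v (-c))
    (by simpa using tvmap_comp B halt v (-c)) (tvmap_comp B halt v c)

variable (halt : B.IsAlt)

lemma tv_apply (v : V) (c : F) (x : V) : tv B halt v c x = x + (c * B x v) • v :=
  tvmap_apply B v c x

lemma tv_fix {v : V} (c : F) {x : V} (h : B x v = 0) : tv B halt v c x = x := by
  simp [tv_apply, h]

lemma tv_symp (v : V) (c : F) (x y : V) :
    B (tv B halt v c x) (tv B halt v c y) = B x y := by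
  simp only [tv_apply, map_add, map_smul, LinearMap.add_apply, LinearMap.smul_apply,
    smul_eq_mul, halt.self_eq_zero, mul_zero, add_zero]
  rw [← LinearMap.IsAlt.neg halt y v]
  ring

lemma tv_conj (g : V ≃ₗ[F] V) (hg : ∀ x y, B (g x) (g y) = B x y) (v : V) (c : F) :
    tv B halt (g v) c = g * tv B halt v c * g⁻¹ := by
  ext x
  have h1 : (g * tv B halt v c * g⁻¹) x = g (tv B halt v c (g.symm x)) := rfl
  have h2 : B (g.symm x) v = B x (g v) := by
    conv_rhs => rw [show x = g (g.symm x) from (g.apply_symm_apply x).symm]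
    exact (hg (g.symm x) v).symm ▸ rfl
  rw [h1, tv_apply, tv_apply, map_add, map_smul, g.apply_symm_apply, h2]

/-- Two transvections with directions in `S` suffice to move `u` to `w`. -/
lemma two_step (S : Submodule F V) (u w : V) (hus : w - u ∈ S)
    (hu : ∃ d ∈ S, B u d ≠ 0) (hw : ∃ d ∈ S, B w d ≠ 0) :
    ∃ d₁ ∈ S, ∃ d₂ ∈ S, ∃ c₁ c₂ : F,
      tv B halt d₂ c₂ (tv B halt d₁ c₁ u) = w := by
  by_cases huw : u = w
  · exact ⟨0, S.zero_mem, 0, S.zero_mem, 0, 0, by simp [tv_apply, huw]⟩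
  by_cases hbuw : B u w = 0
  · -- find d ∈ S with B u d ≠ 0 and B w d ≠ 0
    obtain ⟨d₀, hd₀S, hd₀⟩ := hu
    obtain ⟨d₁', hd₁S, hd₁⟩ := hw
    obtain ⟨d, hdS, hud, hwd⟩ : ∃ d ∈ S, B u d ≠ 0 ∧ B w d ≠ 0 := by
      by_cases h1 : B w d₀ ≠ 0
      · exact ⟨d₀, hd₀S, hd₀, h1⟩
      by_cases h2 : B u d₁' ≠ 0
      · exact ⟨d₁', hd₁S, h2, hd₁⟩
      push_neg at h1 h2
      exact ⟨d₀ + d₁', S.add_mem hd₀S hd₁S, by simp [h2, hd₀], by simp [h1, hd₁]⟩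
    set m := u + d with hm
    have hmw : B m w ≠ 0 := by
      have hdw : B d w ≠ 0 := by
        intro h
        exact hwd (by rw [← LinearMap.IsAlt.neg halt w d] at h; simpa using h)
      simpa [hm, hbuw] using hdw
    refine ⟨d, hdS, w - m, by simpa [hm, sub_sub] using S.sub_mem hus hdS,
      (B u d)⁻¹, (B m w)⁻¹, ?_⟩
    have step1 : tv B halt d (B u d)⁻¹ u = m := by
      rw [tv_apply, inv_mul_cancel₀ hud, one_smul]
    rw [step1, tv_apply]
    have : B m (w - m) = B m w := by simp [map_sub, halt.self_eq_zero]
    rw [this, inv_mul_cancel₀ hmw, one_smul, add_sub_cancel]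
  · refine ⟨w - u, hus, 0, S.zero_mem, (B u w)⁻¹, 0, ?_⟩
    have step1 : tv B halt (w - u) (B u w)⁻¹ u = w := by
      rw [tv_apply]
      have : B u (w - u) = B u w := by simp [map_sub, halt.self_eq_zero]
      rw [this, inv_mul_cancel₀ hbuw, one_smul, add_sub_cancel]
    rw [step1, tv_apply]
    simp

end Transvection

section Dual
variable {F V : Type*} [Field F] [AddCommGroup V] [Module F V] [FiniteDimensional F V]
  (B : LinearMap.BilinForm F V)

lemma exists_ortho (halt : B.IsAlt) (hnd : B.Nondegenerate) (U : Submodule F V) {v : V}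
    (hv : v ∉ U) : ∃ d : V, (∀ x ∈ U, B x d = 0) ∧ B v d ≠ 0 := by
  obtain ⟨f, hf, hf0⟩ := U.exists_dual_map_eq_bot_of_notMem hv inferInstance
  refine ⟨(B.toDual hnd).symm f, ?_, ?_⟩
  · intro x hx
    have hfx : f x = 0 := by
      have : f x ∈ U.map f := Submodule.mem_map_of_mem hx
      rwa [hf0, Submodule.mem_bot] at this
    have hd : B ((B.toDual hnd).symm f) x = f x :=
      LinearMap.BilinForm.apply_toDual_symm_apply (hB := hnd) f x
    rw [← LinearMap.IsAlt.neg halt ((B.toDual hnd).symm f) x, hd, hfx, neg_zero]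
  · have hd : B ((B.toDual hnd).symm f) v = f v :=
      LinearMap.BilinForm.apply_toDual_symm_apply (hB := hnd) f v
    rw [← LinearMap.IsAlt.neg halt ((B.toDual hnd).symm f) v, hd]
    simpa using hf

end Dual

section FixList
variable {F V : Type*} [Field F] [AddCommGroup V] [Module F V] [FiniteDimensional F V]
  (B : LinearMap.BilinForm F V) (halt : B.IsAlt) (hnd : B.Nondegenerate)

include hnd in
lemma fix_list (H : Subgroup (V ≃ₗ[F] V)) (htv : ∀ v c, tv B halt v c ∈ H)
    (g : V ≃ₗ[F] V) (hg : ∀ x y, B (g x) (g y) = B x y) :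
    ∀ l : List V,
      (∀ v tl, v :: tl <:+ l → v ∉ Submodule.span F {x | x ∈ tl}) →
      ∃ h : V ≃ₗ[F] V, h ∈ H ∧ (∀ x y, B (h x) (h y) = B x y) ∧ ∀ v ∈ l, h (g v) = v := by
  intro l
  induction l with
  | nil => exact fun _ => ⟨1, H.one_mem, by simp, by simp⟩
  | cons v tl ih =>
    intro hli
    obtain ⟨h₁, h₁H, h₁symp, h₁fix⟩ := ih (fun w tl' hsuf => hli w tl' (hsuf.trans ⟨[v], rfl⟩))
    have h₁g : ∀ x y, B (h₁ (g x)) (h₁ (g y)) = B x y := fun x y => by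
      rw [h₁symp, hg]
    set U : Submodule F V := Submodule.span F {x | x ∈ tl} with hU
    set u : V := h₁ (g v) with hu
    have hvU : v ∉ U := hli v tl ⟨[], rfl⟩
    -- h₁ ∘ g fixes U pointwise
    have hfixU : ∀ z ∈ U, h₁ (g z) = z := by
      intro z hz
      have : Set.EqOn (h₁.toLinearMap ∘ₗ g.toLinearMap) (LinearMap.id (R := F) (M := V))
          {x | x ∈ tl} := fun x hx => h₁fix x hx
      exact LinearMap.eqOn_span this hz
    have huU : u ∉ U := by
      intro huu
      have h3 : h₁ (g u) = h₁ (g v) := (hfixU u huu).trans hu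
      have h4 : u = v := g.injective (h₁.injective h3)
      exact hvU (h4 ▸ huu)
    -- orthogonal complement as submodule
    set S : Submodule F V := B.orthogonal U with hS
    have hmemS : ∀ d, d ∈ S ↔ ∀ n ∈ U, B n d = 0 := fun d =>
      LinearMap.BilinForm.mem_orthogonal_iff
    have hvu : v - u ∈ S := by
      rw [hmemS]
      intro n hn
      have : ∀ x ∈ ({x | x ∈ tl} : Set V), B x (v - u) = 0 := by
        intro x hx
        have h1 : B x u = B x v := by
          conv_lhs => rw [hu, show (x : V) = h₁ (g x) from (h₁fix x hx).symm]
          exact h₁g x v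
        rw [map_sub, h1, sub_self]
      have hker : U ≤ LinearMap.ker (B.flip (v - u)) := by
        rw [hU, Submodule.span_le]
        intro x hx
        simpa [LinearMap.mem_ker] using this x hx
      simpa using hker hn
    obtain ⟨d, hdorth, hdv⟩ := exists_ortho B halt hnd U huU
    obtain ⟨d', hd'orth, hd'v⟩ := exists_ortho B halt hnd U hvU
    obtain ⟨d₁, hd₁S, d₂, hd₂S, c₁, c₂, hmove⟩ :=
      two_step B halt S u v hvu ⟨d, (hmemS d).2 hdorth, hdv⟩ ⟨d', (hmemS d').2 hd'orth, hd'v⟩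
    refine ⟨tv B halt d₂ c₂ * tv B halt d₁ c₁ * h₁,
      H.mul_mem (H.mul_mem (htv d₂ c₂) (htv d₁ c₁)) h₁H, ?_, ?_⟩
    · intro x y
      show B (tv B halt d₂ c₂ (tv B halt d₁ c₁ (h₁ x))) (tv B halt d₂ c₂ (tv B halt d₁ c₁ (h₁ y)))
        = B x y
      rw [tv_symp, tv_symp, h₁symp]
    · intro w hw
      show tv B halt d₂ c₂ (tv B halt d₁ c₁ (h₁ (g w))) = w
      rcases List.mem_cons.1 hw with rfl | hwtl
      · exact hmove
      · have hfix : h₁ (g w) = w := h₁fix w hwtl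
        have hwU : (w : V) ∈ U := Submodule.subset_span hwtl
        rw [hfix, tv_fix B halt c₁ (((hmemS d₁).1 hd₁S) w hwU),
          tv_fix B halt c₂ (((hmemS d₂).1 hd₂S) w hwU)]

end FixList
/-- symplectic analogue. `V = V₁ ⟂ V₂ ⟂ V₃` nondegenerate symplectic
over a finite field of odd characteristic; if `H ⊆ Sp(V)` contains `Sp(V₁ ⊕ V₂)`
and `Sp(V₂ ⊕ V₃)`, then `H = Sp(V)`. -/
theorem stmt_1 (F : Type*) [Field F] [Fintype F] (hchar : ringChar F ≠ 2)
    (V : Type*) [AddCommGroup V] [Module F V] [FiniteDimensional F V]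
    (B : LinearMap.BilinForm F V) (halt : B.IsAlt) (hnd : B.Nondegenerate)
    (V₁ V₂ V₃ : Submodule F V)
    (h1 : V₁ ≠ ⊥) (h2 : V₂ ≠ ⊥) (h3 : V₃ ≠ ⊥)
    (hsup : V₁ ⊔ V₂ ⊔ V₃ = ⊤)
    (hind1 : V₁ ⊓ (V₂ ⊔ V₃) = ⊥) (hind2 : V₂ ⊓ (V₁ ⊔ V₃) = ⊥)
    (hind3 : V₃ ⊓ (V₁ ⊔ V₂) = ⊥)
    (horth12 : ∀ x ∈ V₁, ∀ y ∈ V₂, B x y = 0)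
    (horth13 : ∀ x ∈ V₁, ∀ y ∈ V₃, B x y = 0)
    (horth23 : ∀ x ∈ V₂, ∀ y ∈ V₃, B x y = 0)
    (hndi : ∀ W ∈ ({V₁, V₂, V₃} : Set (Submodule F V)),
      ∀ x ∈ W, (∀ y ∈ W, B x y = 0) → x = 0)
    (H : Subgroup (V ≃ₗ[F] V))
    (hSp : ∀ g ∈ H, ∀ x y : V, B (g x) (g y) = B x y)
    (hL : ∀ g : V ≃ₗ[F] V, (∀ x y : V, B (g x) (g y) = B x y) →
      (∀ x ∈ V₁ ⊔ V₂, g x ∈ V₁ ⊔ V₂) → (∀ x ∈ V₃, g x = x) → g ∈ H)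
    (hR : ∀ g : V ≃ₗ[F] V, (∀ x y : V, B (g x) (g y) = B x y) →
      (∀ x ∈ V₂ ⊔ V₃, g x ∈ V₂ ⊔ V₃) → (∀ x ∈ V₁, g x = x) → g ∈ H) :
    ∀ g : V ≃ₗ[F] V, (∀ x y : V, B (g x) (g y) = B x y) → g ∈ H := by
  have skew : ∀ x y : V, B x y = -B y x := fun x y => (LinearMap.IsAlt.neg halt y x).symm
  -- orthogonality helpers
  have orthL3 : ∀ x ∈ V₁ ⊔ V₂, ∀ y ∈ V₃, B x y = 0 := by
    intro x hx y hy
    obtain ⟨x₁, hx₁, x₂, hx₂, rfl⟩ := Submodule.mem_sup.1 hx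
    rw [map_add, LinearMap.add_apply, horth13 x₁ hx₁ y hy, horth23 x₂ hx₂ y hy, add_zero]
  have orth3L : ∀ x ∈ V₃, ∀ y ∈ V₁ ⊔ V₂, B x y = 0 := fun x hx y hy => by
    rw [skew, orthL3 y hy x hx, neg_zero]
  have orth1R : ∀ x ∈ V₁, ∀ y ∈ V₂ ⊔ V₃, B x y = 0 := by
    intro x hx y hy
    obtain ⟨y₂, hy₂, y₃, hy₃, rfl⟩ := Submodule.mem_sup.1 hy
    rw [map_add, horth12 x hx y₂ hy₂, horth13 x hx y₃ hy₃, add_zero]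
  have orth32 : ∀ x ∈ V₃, ∀ y ∈ V₂, B x y = 0 := fun x hx y hy => by
    rw [skew, horth23 y hy x hx, neg_zero]
  have hndV₂ := hndi V₂ (by simp)
  have hndV₃ := hndi V₃ (by simp)
  -- transvections with direction in V₁ ⊔ V₂ lie in H
  have memL : ∀ v ∈ V₁ ⊔ V₂, ∀ c : F, tv B halt v c ∈ H := by
    intro v hv c
    refine hL _ (tv_symp B halt v c) ?_ ?_
    · intro x hx
      rw [tv_apply]
      exact Submodule.add_mem _ hx (Submodule.smul_mem _ _ hv)
    · intro x hx
      exact tv_fix B halt c (orth3L x hx v hv)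
  -- transvections with direction in V₂ ⊔ V₃ lie in H
  have memR : ∀ v ∈ V₂ ⊔ V₃, ∀ c : F, tv B halt v c ∈ H := by
    intro v hv c
    refine hR _ (tv_symp B halt v c) ?_ ?_
    · intro x hx
      rw [tv_apply]
      exact Submodule.add_mem _ hx (Submodule.smul_mem _ _ hv)
    · intro x hx
      exact tv_fix B halt c (orth1R x hx v hv)
  -- all transvections lie in H
  have htv : ∀ (v : V) (c : F), tv B halt v c ∈ H := by
    intro v c
    have hvT : v ∈ V₁ ⊔ (V₂ ⊔ V₃) := by
      rw [← sup_assoc, hsup]; trivial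
    obtain ⟨a, ha, w, hw, rfl⟩ := Submodule.mem_sup.1 hvT
    by_cases hw0 : w = 0
    · subst hw0
      rw [add_zero]
      exact memL a (le_sup_left (a := V₁) (b := V₂) ha) c
    by_cases ha0 : a = 0
    · subst ha0
      rw [zero_add]
      exact memR w hw c
    -- general case: conjugate a transvection along a + b, b ∈ V₂
    obtain ⟨b, hb, hb0⟩ := Submodule.ne_bot_iff V₂ |>.1 h2
    have hu : ∃ d ∈ V₂ ⊔ V₃, B b d ≠ 0 := by
      by_contra hcon
      push_neg at hcon
      exact hb0 (hndV₂ b hb fun y hy => hcon y (le_sup_left (a := V₂) (b := V₃) hy))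
    have hwx : ∃ d ∈ V₂ ⊔ V₃, B w d ≠ 0 := by
      obtain ⟨w₂, hw₂, w₃, hw₃, rfl⟩ := Submodule.mem_sup.1 hw
      by_cases h2' : w₂ = 0
      · subst h2'
        rw [zero_add] at hw0 ⊢
        by_contra hcon
        push_neg at hcon
        exact hw0 (hndV₃ w₃ hw₃ fun y hy =>
          hcon y (le_sup_right (a := V₂) (b := V₃) hy))
      · by_contra hcon
        push_neg at hcon
        refine h2' (hndV₂ w₂ hw₂ fun y hy => ?_)
        have h3' := hcon y (le_sup_left (a := V₂) (b := V₃) hy)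
        have h4' : B w₃ y = 0 := orth32 w₃ hw₃ y hy
        rw [map_add, LinearMap.add_apply, h4', add_zero] at h3'
        exact h3'
    obtain ⟨d₁, hd₁S, d₂, hd₂S, c₁, c₂, hmove⟩ :=
      two_step B halt (V₂ ⊔ V₃) b w
        (Submodule.sub_mem _ hw (le_sup_left (a := V₂) (b := V₃) hb)) hu hwx
    set h : V ≃ₗ[F] V := tv B halt d₂ c₂ * tv B halt d₁ c₁ with hh
    have hhH : h ∈ H := H.mul_mem (memR d₂ hd₂S c₂) (memR d₁ hd₁S c₁)
    have hsymp : ∀ x y, B (h x) (h y) = B x y := by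
      intro x y
      show B (tv B halt d₂ c₂ (tv B halt d₁ c₁ x)) (tv B halt d₂ c₂ (tv B halt d₁ c₁ y)) = B x y
      rw [tv_symp, tv_symp]
    have hab : h (a + b) = a + w := by
      show tv B halt d₂ c₂ (tv B halt d₁ c₁ (a + b)) = a + w
      rw [map_add, tv_fix B halt c₁ (orth1R a ha d₁ hd₁S), map_add,
        tv_fix B halt c₂ (orth1R a ha d₂ hd₂S), hmove]
    have hconj : tv B halt (a + w) c = h * tv B halt (a + b) c * h⁻¹ := by
      rw [← hab]
      exact tv_conj B halt h hsymp (a + b) c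
    rw [hconj]
    exact H.mul_mem (H.mul_mem hhH
      (memL (a + b) (Submodule.add_mem _ (le_sup_left (a := V₁) (b := V₂) ha)
        (le_sup_right (a := V₁) (b := V₂) hb)) c)) (H.inv_mem hhH)
  -- main argument
  intro g hg
  set n := Module.finrank F V₃ with hn
  set b : Module.Basis (Fin n) F V₃ := Module.finBasis F V₃ with hbB
  set f : Fin n → V := fun i => (b i : V) with hfdef
  have hf : LinearIndependent F f :=
    b.linearIndependent.map' V₃.subtype (Submodule.ker_subtype V₃)
  set l : List V := (List.finRange n).map f with hl
  have hnodup : l.Nodup := (List.nodup_finRange n).map hf.injective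
  have hsuf : ∀ v tl, v :: tl <:+ l → v ∉ Submodule.span F {x | x ∈ tl} := by
    intro v tl hsuffix
    have hvl : v ∈ l := hsuffix.subset (List.mem_cons_self)
    obtain ⟨i, _, rfl⟩ := List.mem_map.1 hvl
    have hnd2 : (f i :: tl).Nodup := hnodup.sublist hsuffix.sublist
    have hvi : i ∉ {j | f j ∈ tl} := fun hmem => (List.nodup_cons.1 hnd2).1 hmem
    have hsub : {x | x ∈ tl} ⊆ f '' {j | f j ∈ tl} := by
      intro x hx
      have hxl : x ∈ l := hsuffix.subset (List.mem_cons_of_mem _ hx)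
      obtain ⟨j, _, rfl⟩ := List.mem_map.1 hxl
      exact ⟨j, hx, rfl⟩
    intro hmem
    exact hf.notMem_span_image hvi (Submodule.span_mono hsub hmem)
  obtain ⟨h, hH, hhsymp, hfixl⟩ := fix_list B halt hnd H htv g hg l hsuf
  have hV₃span : V₃ ≤ Submodule.span F {x | x ∈ l} := by
    have hsub : Set.range f ⊆ {x | x ∈ l} := by
      rintro _ ⟨i, rfl⟩
      exact List.mem_map.2 ⟨i, List.mem_finRange i, rfl⟩
    have hr : Set.range f = V₃.subtype '' Set.range ⇑b := by
      rw [← Set.range_comp]; rfl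
    have hVeq : V₃ = Submodule.span F (Set.range f) := by
      rw [hr, ← Submodule.map_span, b.span_eq, Submodule.map_top, Submodule.range_subtype]
    rw [hVeq]
    exact Submodule.span_mono hsub
  have hkfix : ∀ x ∈ V₃, h (g x) = x := by
    intro x hx
    have heq : Set.EqOn (h.toLinearMap ∘ₗ g.toLinearMap) (LinearMap.id (R := F) (M := V))
        {x | x ∈ l} := fun y hy => hfixl y hy
    simpa using LinearMap.eqOn_span heq (hV₃span hx)
  have hksymp : ∀ x y : V, B ((h * g) x) ((h * g) y) = B x y := by
    intro x y
    show B (h (g x)) (h (g y)) = B x y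
    rw [hhsymp, hg]
  have hkpres : ∀ x ∈ V₁ ⊔ V₂, (h * g) x ∈ V₁ ⊔ V₂ := by
    intro x hx
    have hT : (h * g) x ∈ V₁ ⊔ V₂ ⊔ V₃ := by rw [hsup]; trivial
    obtain ⟨p, hp, q, hq, hpq⟩ := Submodule.mem_sup.1 hT
    have hq0 : q = 0 := by
      refine hndV₃ q hq fun y hy => ?_
      have e1 : B ((h * g) x) y = 0 := by
        have e := hksymp x y
        rw [show (h * g) y = y from hkfix y hy] at e
        rw [e]
        exact orthL3 x hx y hy
      have e2 : B p y = 0 := orthL3 p hp y hy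
      have e3 : B (p + q) y = 0 := by rw [hpq]; exact e1
      rw [map_add, LinearMap.add_apply, e2, zero_add] at e3
      exact e3
    have : (h * g) x = p := by rw [← hpq, hq0, add_zero]
    rw [this]
    exact hp
  have hk : h * g ∈ H := hL (h * g) hksymp hkpres fun x hx => hkfix x hx
  have hgdecomp : g = h⁻¹ * (h * g) := by rw [← mul_assoc, inv_mul_cancel, one_mul]
  rw [hgdecomp]
  exact H.mul_mem (H.inv_mem hH) hk
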